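/- Let χ : D → ℝ be a twice continuously differentiable strictly convex function on an open convex subset D of ℝ², with strictly positive cross partial ∂²χ/∂ν∂Δ > 0 everywhere. If (ν,Δ), (ν',Δ') ∈ D satisfy χ_ν(ν,Δ) ≥ χ_ν(ν',Δ') and χ_Δ(ν,Δ) ≤ χ_Δ(ν',Δ'), then ν ≥ ν' and Δ ≤ Δ'. Moreover, if both hypotheses hold with strict inequalities, then ν > ν' and Δ < Δ'. -/

import Mathlib

open Set intervalIntegral

namespace SingleCrossingAux

variable {D : Set (ℝ × ℝ)} {χ : ℝ × ℝ → ℝ}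

/-- The second derivative of `χ`. -/
noncomputable def f2 (χ : ℝ × ℝ → ℝ) (x : ℝ × ℝ) : (ℝ × ℝ) →L[ℝ] (ℝ × ℝ) →L[ℝ] ℝ :=
  fderiv ℝ (fderiv ℝ χ) x

lemma hasFDerivAt_chi (hD : IsOpen D) (hχ : ContDiffOn ℝ 2 χ D) {x : ℝ × ℝ} (hx : x ∈ D) :
    HasFDerivAt χ (fderiv ℝ χ x) x :=
  ((hχ.contDiffAt (hD.mem_nhds hx)).differentiableAt (by norm_num)).hasFDerivAt

lemma hasFDerivAt_fderiv (hD : IsOpen D) (hχ : ContDiffOn ℝ 2 χ D) {x : ℝ × ℝ} (hx : x ∈ D) :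
    HasFDerivAt (fderiv ℝ χ) (f2 χ x) x := by
  have h1 : ContDiffAt ℝ 2 χ x := hχ.contDiffAt (hD.mem_nhds hx)
  have h2 : ContDiffAt ℝ 1 (fderiv ℝ χ) x := h1.fderiv_right (by norm_num)
  exact (h2.differentiableAt (by norm_num)).hasFDerivAt

lemma hasFDerivAt_dirderiv (hD : IsOpen D) (hχ : ContDiffOn ℝ 2 χ D) {x : ℝ × ℝ} (hx : x ∈ D)
    (w : ℝ × ℝ) :
    HasFDerivAt (fun y => fderiv ℝ χ y w)
      ((ContinuousLinearMap.apply ℝ ℝ w).comp (f2 χ x)) x :=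
  (ContinuousLinearMap.apply ℝ ℝ w).hasFDerivAt.comp x (hasFDerivAt_fderiv hD hχ hx)

lemma fderiv_dirderiv (hD : IsOpen D) (hχ : ContDiffOn ℝ 2 χ D) {x : ℝ × ℝ} (hx : x ∈ D)
    (w z : ℝ × ℝ) :
    fderiv ℝ (fun y => fderiv ℝ χ y w) x z = f2 χ x z w := by
  rw [(hasFDerivAt_dirderiv hD hχ hx w).fderiv]
  rfl

lemma f2_symm (hD : IsOpen D) (hχ : ContDiffOn ℝ 2 χ D) {x : ℝ × ℝ} (hx : x ∈ D)
    (w z : ℝ × ℝ) : f2 χ x w z = f2 χ x z w :=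
  ((hχ.contDiffAt (hD.mem_nhds hx)).isSymmSndFDerivAt (by simp [minSmoothness_of_isRCLikeNormedField])) w z

lemma f2_contOn (hD : IsOpen D) (hχ : ContDiffOn ℝ 2 χ D) : ContinuousOn (f2 χ) D := by
  have h1 : ContDiffOn ℝ 1 (fderiv ℝ χ) D := hχ.fderiv_of_isOpen hD (by norm_num)
  have h2 : ContDiffOn ℝ 0 (fderiv ℝ (fderiv ℝ χ)) D := h1.fderiv_of_isOpen hD (by norm_num)
  exact h2.continuousOn

lemma strictConvexOn_line (hDc : Convex ℝ D) (hconv : StrictConvexOn ℝ D χ)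
    (p d : ℝ × ℝ) (hd : d ≠ 0) :
    StrictConvexOn ℝ {t : ℝ | p + t • d ∈ D} (fun t => χ (p + t • d)) := by
  have key : ∀ x y a b : ℝ, a + b = 1 →
      p + (a * x + b * y) • d = a • (p + x • d) + b • (p + y • d) := by
    intro x y a b hab
    have hb : b = 1 - a := by linarith
    subst hb
    module
  constructor
  · intro x hx y hy a b ha hb hab
    have hmem := hDc hx hy ha hb hab
    show p + (a • x + b • y) • d ∈ D
    simp only [smul_eq_mul]
    rw [key x y a b hab]
    exact hmem
  · intro x hx y hy hxy a b ha hb hab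
    have hne : p + x • d ≠ p + y • d := by
      intro h
      exact hxy (smul_left_injective ℝ hd (by simpa using h))
    have h2 := hconv.2 hx hy hne ha hb hab
    show χ (p + (a • x + b • y) • d) < a • χ (p + x • d) + b • χ (p + y • d)
    simp only [smul_eq_mul]
    rw [key x y a b hab]
    simpa using h2

lemma grad_mono (hD : IsOpen D) (hDc : Convex ℝ D) (hχ : ContDiffOn ℝ 2 χ D)
    (hconv : StrictConvexOn ℝ D χ) {a b : ℝ × ℝ} (ha : a ∈ D) (hb : b ∈ D) (hne : a ≠ b) :
    fderiv ℝ χ a (b - a) < fderiv ℝ χ b (b - a) := by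
  have hd : b - a ≠ 0 := sub_ne_zero.2 (Ne.symm hne)
  set S := {t : ℝ | a + t • (b - a) ∈ D} with hS
  have hder : ∀ t ∈ S, HasDerivAt (fun s : ℝ => χ (a + s • (b - a)))
      (fderiv ℝ χ (a + t • (b - a)) (b - a)) t := by
    intro t ht
    have h1 := hasFDerivAt_chi hD hχ (show a + t • (b - a) ∈ D from ht)
    have h2 : HasDerivAt (fun s : ℝ => a + s • (b - a)) (b - a) t := by
      simpa using ((hasDerivAt_id t).smul_const (b - a)).const_add a
    simpa [Function.comp_def] using h1.comp_hasDerivAt t h2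
  have h0 : (0 : ℝ) ∈ S := by simp [hS, ha]
  have h1 : (1 : ℝ) ∈ S := by simp [hS, hb]
  have hsc := strictConvexOn_line hDc hconv a (b - a) hd
  have hmono := hsc.strictMonoOn_deriv (fun t ht => (hder t ht).differentiableAt) h0 h1
    zero_lt_one
  rw [(hder 0 h0).deriv, (hder 1 h1).deriv] at hmono
  simpa using hmono

lemma diag_nonneg (hD : IsOpen D) (hDc : Convex ℝ D) (hχ : ContDiffOn ℝ 2 χ D)
    (hconv : StrictConvexOn ℝ D χ) {y : ℝ × ℝ} (hy : y ∈ D) (e : ℝ × ℝ) (he : e ≠ 0) :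
    0 ≤ f2 χ y e e := by
  obtain ⟨ε, hε, hball⟩ := Metric.isOpen_iff.1 hD y hy
  set δ := ε / (‖e‖ + 1) with hδdef
  have hepos : (0 : ℝ) < ‖e‖ + 1 := by positivity
  have hδ : 0 < δ := div_pos hε hepos
  have hmem : ∀ s : ℝ, |s| < δ → y + s • e ∈ D := by
    intro s hs
    apply hball
    rw [Metric.mem_ball, dist_eq_norm]
    have h1 : ‖y + s • e - y‖ = |s| * ‖e‖ := by
      simp [norm_smul]
    rw [h1]
    have h2 : |s| * ‖e‖ ≤ |s| * (‖e‖ + 1) := by nlinarith [abs_nonneg s]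
    have h3 : |s| * (‖e‖ + 1) < δ * (‖e‖ + 1) := by nlinarith [abs_nonneg s]
    have h4 : δ * (‖e‖ + 1) = ε := by rw [hδdef, div_mul_cancel₀ _ hepos.ne']
    linarith
  set φ := fun s : ℝ => fderiv ℝ χ (y + s • e) e with hφ
  have hφmono : StrictMonoOn φ (Ioo (-δ) δ) := by
    intro s hs s' hs' hss
    have hsa : y + s • e ∈ D := hmem s (abs_lt.2 ⟨hs.1, hs.2⟩)
    have hsb : y + s' • e ∈ D := hmem s' (abs_lt.2 ⟨hs'.1, hs'.2⟩)
    have hne : y + s • e ≠ y + s' • e := by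
      intro h
      exact absurd (smul_left_injective ℝ he (by simpa using h)) (ne_of_lt hss)
    have hkey := grad_mono hD hDc hχ hconv hsa hsb hne
    have hdiff : (y + s' • e) - (y + s • e) = (s' - s) • e := by
      rw [sub_smul]; abel
    rw [hdiff, (fderiv ℝ χ _).map_smul, (fderiv ℝ χ _).map_smul] at hkey
    have hpos : 0 < s' - s := sub_pos.2 hss
    simp only [smul_eq_mul] at hkey
    have := (mul_lt_mul_iff_right₀ hpos).1 hkey
    simpa [hφ] using this
  have hφder : HasDerivAt φ (f2 χ y e e) 0 := by
    have h1 := hasFDerivAt_dirderiv hD hχ hy e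
    have hy0 : y = y + (0 : ℝ) • e := by simp
    rw [hy0] at h1
    have h2 : HasDerivAt (fun s : ℝ => y + s • e) e 0 := by
      simpa using ((hasDerivAt_id (0 : ℝ)).smul_const e).const_add y
    have hcomp := h1.comp_hasDerivAt 0 h2
    simp only [← hy0] at hcomp
    simpa [Function.comp_def, hφ] using hcomp
  have htend : Filter.Tendsto (slope φ 0) (nhdsWithin 0 (Ioi 0)) (nhds (f2 χ y e e)) :=
    (hasDerivAt_iff_tendsto_slope.1 hφder).mono_left
      (nhdsWithin_mono _ fun s hs => ne_of_gt hs)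
  refine ge_of_tendsto htend ?_
  filter_upwards [Ioo_mem_nhdsGT_of_mem (Set.left_mem_Ico.2 hδ)] with s hs
  have h0 : (0 : ℝ) ∈ Ioo (-δ) δ := ⟨by linarith, hδ⟩
  have hsI : s ∈ Ioo (-δ) δ := ⟨by linarith [hs.1], hs.2⟩
  have hlt := hφmono h0 hsI hs.1
  have hslope : slope φ 0 s = (φ s - φ 0) / (s - 0) := slope_def_field φ 0 s
  rw [hslope]
  apply div_nonneg (by linarith) (by simpa using hs.1.le)

lemma clm_split {M : Type*} [NormedAddCommGroup M] [NormedSpace ℝ M]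
    (L : (ℝ × ℝ) →L[ℝ] M) (d : ℝ × ℝ) :
    L d = d.1 • L (1, 0) + d.2 • L (0, 1) := by
  have h : d = d.1 • ((1 : ℝ), (0 : ℝ)) + d.2 • ((0 : ℝ), (1 : ℝ)) := by
    ext <;> simp
  conv_lhs => rw [h]
  rw [map_add, map_smul, map_smul]

lemma ftc (hD : IsOpen D) (hDc : Convex ℝ D) (hχ : ContDiffOn ℝ 2 χ D)
    {a b : ℝ × ℝ} (ha : a ∈ D) (hb : b ∈ D) (w : ℝ × ℝ) :
    fderiv ℝ χ b w - fderiv ℝ χ a w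
      = ∫ t in (0 : ℝ)..1, f2 χ (a + t • (b - a)) (b - a) w := by
  have hseg : ∀ t ∈ Icc (0 : ℝ) 1, a + t • (b - a) ∈ D := by
    intro t ht
    have h : a + t • (b - a) = (1 - t) • a + t • b := by module
    rw [h]
    exact hDc ha hb (by linarith [ht.2]) ht.1 (by ring)
  have hγcont : Continuous fun t : ℝ => a + t • (b - a) :=
    continuous_const.add (continuous_id.smul continuous_const)
  have hderiv : ∀ t ∈ uIcc (0 : ℝ) 1,
      HasDerivAt (fun t => fderiv ℝ χ (a + t • (b - a)) w)
        (f2 χ (a + t • (b - a)) (b - a) w) t := by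
    intro t ht
    rw [uIcc_of_le zero_le_one] at ht
    have h1 := hasFDerivAt_dirderiv hD hχ (hseg t ht) w
    have h2 : HasDerivAt (fun s : ℝ => a + s • (b - a)) (b - a) t := by
      simpa using ((hasDerivAt_id t).smul_const (b - a)).const_add a
    simpa [Function.comp_def] using h1.comp_hasDerivAt t h2
  have hcont : ContinuousOn (fun t => f2 χ (a + t • (b - a)) (b - a) w) (uIcc (0 : ℝ) 1) := by
    rw [uIcc_of_le zero_le_one]
    have h1 : ContinuousOn (fun t => f2 χ (a + t • (b - a))) (Icc (0 : ℝ) 1) :=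
      (f2_contOn hD hχ).comp hγcont.continuousOn hseg
    exact (h1.clm_apply continuousOn_const).clm_apply continuousOn_const
  have := intervalIntegral.integral_eq_sub_of_hasDerivAt hderiv hcont.intervalIntegrable
  rw [this]
  norm_num

end SingleCrossingAux

open SingleCrossingAux Set in
/-- Lemma A.4 (single-crossing for the auxiliary cost function): for a C²
strictly convex supermodular function `χ` on an open convex `D ⊆ ℝ²`, ordering
of the partial derivatives implies ordering of the arguments, strictly so
whenever the derivative comparisons are strict. -/
theorem single_crossing_chi
    (D : Set (ℝ × ℝ)) (hD : IsOpen D) (hDc : Convex ℝ D)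
    (χ : ℝ × ℝ → ℝ) (hχ : ContDiffOn ℝ 2 χ D)
    (hconv : StrictConvexOn ℝ D χ)
    (hcross : ∀ p ∈ D, 0 < fderiv ℝ (fun q => fderiv ℝ χ q (1, 0)) p (0, 1))
    (p q : ℝ × ℝ) (hp : p ∈ D) (hq : q ∈ D) :
    ((fderiv ℝ χ q (1, 0) ≤ fderiv ℝ χ p (1, 0) ∧
        fderiv ℝ χ p (0, 1) ≤ fderiv ℝ χ q (0, 1)) →
      (q.1 ≤ p.1 ∧ p.2 ≤ q.2)) ∧
    ((fderiv ℝ χ q (1, 0) < fderiv ℝ χ p (1, 0) ∧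
        fderiv ℝ χ p (0, 1) < fderiv ℝ χ q (0, 1)) →
      (q.1 < p.1 ∧ p.2 < q.2)) := by
  have hseg : ∀ t ∈ Icc (0 : ℝ) 1, p + t • (q - p) ∈ D := by
    intro t ht
    have h : p + t • (q - p) = (1 - t) • p + t • q := by module
    rw [h]
    exact hDc hp hq (by linarith [ht.2]) ht.1 (by ring)
  have hγcont : Continuous fun t : ℝ => p + t • (q - p) :=
    continuous_const.add (continuous_id.smul continuous_const)
  have hcont : ∀ z w : ℝ × ℝ,
      ContinuousOn (fun t => f2 χ (p + t • (q - p)) z w) (uIcc (0 : ℝ) 1) := by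
    intro z w
    rw [uIcc_of_le zero_le_one]
    have h1 : ContinuousOn (fun t => f2 χ (p + t • (q - p))) (Icc (0 : ℝ) 1) :=
      (f2_contOn hD hχ).comp hγcont.continuousOn hseg
    exact (h1.clm_apply continuousOn_const).clm_apply continuousOn_const
  have hintb : ∀ z w : ℝ × ℝ,
      IntervalIntegrable (fun t => f2 χ (p + t • (q - p)) z w) MeasureTheory.volume 0 1 :=
    fun z w => (hcont z w).intervalIntegrable
  set I11 := ∫ t in (0 : ℝ)..1, f2 χ (p + t • (q - p)) (1, 0) (1, 0) with hI11def
  set I12 := ∫ t in (0 : ℝ)..1, f2 χ (p + t • (q - p)) (1, 0) (0, 1) with hI12def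
  set I22 := ∫ t in (0 : ℝ)..1, f2 χ (p + t • (q - p)) (0, 1) (0, 1) with hI22def
  have h10 : ((1 : ℝ), (0 : ℝ)) ≠ 0 := by norm_num [Prod.ext_iff]
  have h01 : ((0 : ℝ), (1 : ℝ)) ≠ 0 := by norm_num [Prod.ext_iff]
  have hI11 : 0 ≤ I11 := intervalIntegral.integral_nonneg zero_le_one
    (fun t ht => diag_nonneg hD hDc hχ hconv (hseg t ht) (1, 0) h10)
  have hI22 : 0 ≤ I22 := intervalIntegral.integral_nonneg zero_le_one
    (fun t ht => diag_nonneg hD hDc hχ hconv (hseg t ht) (0, 1) h01)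
  have hI12 : 0 < I12 := by
    apply intervalIntegral.intervalIntegral_pos_of_pos_on (hintb (1, 0) (0, 1)) _ zero_lt_one
    intro t ht
    have hx := hseg t ⟨ht.1.le, ht.2.le⟩
    have h1 := hcross _ hx
    rw [fderiv_dirderiv hD hχ hx] at h1
    rwa [f2_symm hD hχ hx ((0 : ℝ), (1 : ℝ)) ((1 : ℝ), (0 : ℝ))] at h1
  -- splitting of the direction
  have hsplit : ∀ w : ℝ × ℝ, ∀ t : ℝ,
      f2 χ (p + t • (q - p)) (q - p) w
        = (q.1 - p.1) * f2 χ (p + t • (q - p)) (1, 0) w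
          + (q.2 - p.2) * f2 χ (p + t • (q - p)) (0, 1) w := by
    intro w t
    rw [clm_split (f2 χ (p + t • (q - p))) (q - p)]
    simp [smul_eq_mul]
  have hsum : ∀ w : ℝ × ℝ,
      (∫ t in (0 : ℝ)..1, f2 χ (p + t • (q - p)) (q - p) w)
        = (q.1 - p.1) * (∫ t in (0 : ℝ)..1, f2 χ (p + t • (q - p)) (1, 0) w)
          + (q.2 - p.2) * (∫ t in (0 : ℝ)..1, f2 χ (p + t • (q - p)) (0, 1) w) := by
    intro w
    simp_rw [hsplit w]
    rw [intervalIntegral.integral_add ((hintb (1, 0) w).const_mul _)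
      ((hintb (0, 1) w).const_mul _), intervalIntegral.integral_const_mul,
      intervalIntegral.integral_const_mul]
  have hA : fderiv ℝ χ q (1, 0) - fderiv ℝ χ p (1, 0)
      = (q.1 - p.1) * I11 + (q.2 - p.2) * I12 := by
    rw [ftc hD hDc hχ hp hq (1, 0), hsum (1, 0)]
    congr 1
    congr 1
    apply intervalIntegral.integral_congr
    intro t ht
    rw [uIcc_of_le zero_le_one] at ht
    exact f2_symm hD hχ (hseg t ht) _ _
  have hB : fderiv ℝ χ q (0, 1) - fderiv ℝ χ p (0, 1)
      = (q.1 - p.1) * I12 + (q.2 - p.2) * I22 := by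
    rw [ftc hD hDc hχ hp hq (0, 1), hsum (0, 1)]
  have hMono : p ≠ q →
      0 < (q.1 - p.1) * (fderiv ℝ χ q (1, 0) - fderiv ℝ χ p (1, 0))
        + (q.2 - p.2) * (fderiv ℝ χ q (0, 1) - fderiv ℝ χ p (0, 1)) := by
    intro hne
    have h := grad_mono hD hDc hχ hconv hp hq hne
    rw [clm_split (fderiv ℝ χ p) (q - p), clm_split (fderiv ℝ χ q) (q - p)] at h
    simp only [Prod.fst_sub, Prod.snd_sub, smul_eq_mul] at h
    nlinarith [h]
  have weak : (fderiv ℝ χ q (1, 0) ≤ fderiv ℝ χ p (1, 0) ∧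
      fderiv ℝ χ p (0, 1) ≤ fderiv ℝ χ q (0, 1)) → (q.1 ≤ p.1 ∧ p.2 ≤ q.2) := by
    rintro ⟨h1, h2⟩
    have hA' : fderiv ℝ χ q (1, 0) - fderiv ℝ χ p (1, 0) ≤ 0 := by linarith
    have hB' : 0 ≤ fderiv ℝ χ q (0, 1) - fderiv ℝ χ p (0, 1) := by linarith
    constructor
    · by_contra hcon
      push_neg at hcon
      have hu : 0 < q.1 - p.1 := by linarith
      have hne : p ≠ q := by
        intro hEq
        rw [hEq] at hu
        simp at hu
      have hM := hMono hne
      have huA : (q.1 - p.1) * (fderiv ℝ χ q (1, 0) - fderiv ℝ χ p (1, 0)) ≤ 0 :=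
        mul_nonpos_of_nonneg_of_nonpos hu.le hA'
      have hvB : 0 < (q.2 - p.2) * (fderiv ℝ χ q (0, 1) - fderiv ℝ χ p (0, 1)) := by linarith
      have hv : 0 < q.2 - p.2 := by
        rcases le_or_gt (q.2 - p.2) 0 with hv | hv
        · exact absurd hvB (not_lt.2 (mul_nonpos_of_nonpos_of_nonneg hv hB'))
        · exact hv
      nlinarith [mul_nonneg hu.le hI11, mul_pos hv hI12]
    · by_contra hcon
      push_neg at hcon
      have hv : q.2 - p.2 < 0 := by linarith
      have hne : p ≠ q := by
        intro hEq
        rw [hEq] at hv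
        simp at hv
      have hM := hMono hne
      have hvB : (q.2 - p.2) * (fderiv ℝ χ q (0, 1) - fderiv ℝ χ p (0, 1)) ≤ 0 :=
        mul_nonpos_of_nonpos_of_nonneg hv.le hB'
      have huA : 0 < (q.1 - p.1) * (fderiv ℝ χ q (1, 0) - fderiv ℝ χ p (1, 0)) := by linarith
      have hu : q.1 - p.1 < 0 := by
        rcases le_or_gt 0 (q.1 - p.1) with hu | hu
        · exact absurd huA (not_lt.2 (mul_nonpos_of_nonneg_of_nonpos hu hA'))
        · exact hu
      nlinarith [mul_neg_of_neg_of_pos hu hI12, mul_nonpos_of_nonpos_of_nonneg hv.le hI22]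
  refine ⟨weak, ?_⟩
  rintro ⟨h1, h2⟩
  obtain ⟨hu0, hv0⟩ := weak ⟨h1.le, h2.le⟩
  have hA' : fderiv ℝ χ q (1, 0) - fderiv ℝ χ p (1, 0) < 0 := by linarith
  have hB' : 0 < fderiv ℝ χ q (0, 1) - fderiv ℝ χ p (0, 1) := by linarith
  constructor
  · rcases lt_or_eq_of_le hu0 with h | h
    · exact h
    · exfalso
      have hu : q.1 - p.1 = 0 := by linarith
      rw [hu] at hA
      nlinarith [mul_nonneg (by linarith [hv0] : (0:ℝ) ≤ q.2 - p.2) hI12.le]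
  · rcases lt_or_eq_of_le hv0 with h | h
    · exact h
    · exfalso
      have hv : q.2 - p.2 = 0 := by linarith
      rw [hv] at hB
      nlinarith [mul_nonpos_of_nonpos_of_nonneg (by linarith [hu0] : q.1 - p.1 ≤ 0) hI12.le]
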